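/- Let d, k, r be integers with d ≥ k > r ≥ 2, set a = ⌊k/r⌋ and b = k − r·a, and let B > 0 be real. Then the minimum of d·β₁ + (r−1)·β₂ over all pairs of reals β₁, β₂ ≥ 0 satisfying B ≤ (d·k − k·(k−1)/2)·β₁ + (r·k − k)·β₂ and B ≤ (d·k − r²·a·(a−1)/2 − a·b·r)·β₁ + (r·k − a·r² − b²)·β₂ equals B·(2d+r−1)/(k·(2d+r−k)); i.e., every feasible pair satisfies d·β₁ + (r−1)·β₂ ≥ B·(2d+r−1)/(k·(2d+r−k)), and the pair (β₁, β₂) = (2B/(k·(2d+r−k)), B/(k·(2d+r−k))) is feasible and attains this value. -/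

import Mathlib

set_option maxHeartbeats 1000000

/-- Case 2 (k > r) linear program: the minimum of d·β₁ + (r−1)·β₂ subject to the
type-(1,…,1) and type-(r,…,r,b) cut constraints equals B·(2d+r−1)/(k·(2d+r−k)),
attained at (β₁, β₂) = (2B/(k(2d+r−k)), B/(k(2d+r−k))). -/
theorem case_two_linear_program
    (d k r : ℤ) (hdk : k ≤ d) (hkr : r < k) (hr : 2 ≤ r)
    (a b : ℤ) (ha : a = k / r) (hb : b = k - r * a)
    (B : ℝ) (hB : 0 < B) :
    (∀ β₁ β₂ : ℝ, 0 ≤ β₁ → 0 ≤ β₂ →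
        B ≤ ((d : ℝ) * k - (k : ℝ) * ((k : ℝ) - 1) / 2) * β₁ + ((r : ℝ) * k - k) * β₂ →
        B ≤ ((d : ℝ) * k - (r : ℝ) ^ 2 * a * ((a : ℝ) - 1) / 2 - (a : ℝ) * b * r) * β₁
            + ((r : ℝ) * k - (a : ℝ) * (r : ℝ) ^ 2 - (b : ℝ) ^ 2) * β₂ →
        B * (2 * (d : ℝ) + r - 1) / ((k : ℝ) * (2 * d + r - k))
          ≤ (d : ℝ) * β₁ + ((r : ℝ) - 1) * β₂)
    ∧ (let β₁ : ℝ := 2 * B / ((k : ℝ) * (2 * d + r - k));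
       let β₂ : ℝ := B / ((k : ℝ) * (2 * d + r - k));
       0 ≤ β₁ ∧ 0 ≤ β₂
       ∧ B ≤ ((d : ℝ) * k - (k : ℝ) * ((k : ℝ) - 1) / 2) * β₁ + ((r : ℝ) * k - k) * β₂
       ∧ B ≤ ((d : ℝ) * k - (r : ℝ) ^ 2 * a * ((a : ℝ) - 1) / 2 - (a : ℝ) * b * r) * β₁
             + ((r : ℝ) * k - (a : ℝ) * (r : ℝ) ^ 2 - (b : ℝ) ^ 2) * β₂
       ∧ (d : ℝ) * β₁ + ((r : ℝ) - 1) * β₂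
           = B * (2 * (d : ℝ) + r - 1) / ((k : ℝ) * (2 * d + r - k))) := by
  -- integer facts about b = k % r and a = k / r
  have hr0 : (0:ℤ) < r := by omega
  have hb0 : (0:ℤ) ≤ b := by
    rw [hb, ha, ← Int.emod_def]; exact Int.emod_nonneg k (by omega)
  have hbr : b < r := by
    rw [hb, ha, ← Int.emod_def]; exact Int.emod_lt_of_pos k hr0
  have ha1 : (1:ℤ) ≤ a := by
    rw [ha]; exact (Int.le_ediv_iff_mul_le hr0).mpr (by omega)
  have hbb : (0:ℤ) ≤ b * (b - 1) := by
    rcases (show b = 0 ∨ 1 ≤ b by omega) with h | h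
    · simp [h]
    · exact mul_nonneg (by omega) (by omega)
  -- cast everything to ℝ
  have hbk' : (b:ℝ) = (k:ℝ) - (r:ℝ) * (a:ℝ) := by exact_mod_cast hb
  have hdk' : (k:ℝ) ≤ (d:ℝ) := by exact_mod_cast hdk
  have hkr' : (r:ℝ) < (k:ℝ) := by exact_mod_cast hkr
  have hr' : (2:ℝ) ≤ (r:ℝ) := by exact_mod_cast hr
  have hb0' : (0:ℝ) ≤ (b:ℝ) := by exact_mod_cast hb0
  have hbr' : (b:ℝ) ≤ (r:ℝ) - 1 := by
    have h : ((b:ℤ):ℝ) ≤ (((r - 1 : ℤ)):ℝ) := Int.cast_le.mpr (by omega)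
    push_cast at h; linarith
  have ha1' : (1:ℝ) ≤ (a:ℝ) := by exact_mod_cast ha1
  have hbb' : (0:ℝ) ≤ (b:ℝ) * ((b:ℝ) - 1) := by
    have h : (((0:ℤ)):ℝ) ≤ ((b * (b - 1) : ℤ):ℝ) := Int.cast_le.mpr hbb
    push_cast at h; linarith
  have hM : 0 < (k:ℝ) * (2 * (d:ℝ) + (r:ℝ) - (k:ℝ)) := by nlinarith
  -- coefficient facts
  have hA1pos : 0 < (d:ℝ) * k - (k:ℝ) * ((k:ℝ) - 1) / 2 := by nlinarith
  have hA2A1 : (d:ℝ) * k - (k:ℝ) * ((k:ℝ) - 1) / 2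
      ≤ (d:ℝ) * k - (r:ℝ) ^ 2 * a * ((a:ℝ) - 1) / 2 - (a:ℝ) * b * r := by
    nlinarith [mul_nonneg (mul_nonneg (by linarith : (0:ℝ) ≤ (a:ℝ)) (by linarith : (0:ℝ) ≤ (r:ℝ)))
      (by linarith : (0:ℝ) ≤ (r:ℝ) - 1)]
  have hC2 : (r:ℝ) * k - (a:ℝ) * (r:ℝ) ^ 2 - (b:ℝ) ^ 2 = (b:ℝ) * ((r:ℝ) - (b:ℝ)) := by
    rw [hbk']; ring
  have hC2nn : 0 ≤ (r:ℝ) * k - (a:ℝ) * (r:ℝ) ^ 2 - (b:ℝ) ^ 2 := by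
    rw [hC2]; exact mul_nonneg hb0' (by linarith)
  have hC1C2 : (r:ℝ) * k - (a:ℝ) * (r:ℝ) ^ 2 - (b:ℝ) ^ 2 < (r:ℝ) * k - (k:ℝ) := by
    rw [hC2]; nlinarith [sq_nonneg ((r:ℝ) - 2 * (b:ℝ))]
  have hnD : 0 < ((d:ℝ) * k - (r:ℝ) ^ 2 * a * ((a:ℝ) - 1) / 2 - (a:ℝ) * b * r) * ((r:ℝ) * k - k)
      - ((d:ℝ) * k - (k:ℝ) * ((k:ℝ) - 1) / 2) * ((r:ℝ) * k - (a:ℝ) * (r:ℝ) ^ 2 - (b:ℝ) ^ 2) := by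
    nlinarith [mul_pos (lt_of_lt_of_le hA1pos hA2A1)
        (show (0:ℝ) < ((r:ℝ) * k - k) - ((r:ℝ) * k - (a:ℝ) * (r:ℝ) ^ 2 - (b:ℝ) ^ 2) by linarith),
      mul_nonneg (by linarith : 0 ≤ ((d:ℝ) * k - (r:ℝ) ^ 2 * a * ((a:ℝ) - 1) / 2 - (a:ℝ) * b * r)
        - ((d:ℝ) * k - (k:ℝ) * ((k:ℝ) - 1) / 2)) hC2nn]
  -- dual multipliers (scaled by -Δ > 0)
  have hmu : 0 ≤ (d:ℝ) * ((r:ℝ) * k - k)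
      - ((r:ℝ) - 1) * ((d:ℝ) * k - (k:ℝ) * ((k:ℝ) - 1) / 2) := by nlinarith
  have hlam : 0 ≤ ((r:ℝ) - 1) * ((d:ℝ) * k - (r:ℝ) ^ 2 * a * ((a:ℝ) - 1) / 2 - (a:ℝ) * b * r)
      - (d:ℝ) * ((r:ℝ) * k - (a:ℝ) * (r:ℝ) ^ 2 - (b:ℝ) ^ 2) := by
    nlinarith [mul_nonneg (by nlinarith : (0:ℝ) ≤ (d:ℝ) - (r:ℝ) * (a:ℝ)) hbb',
      mul_nonneg (mul_nonneg (by linarith : (0:ℝ) ≤ (a:ℝ)) (by linarith : (0:ℝ) ≤ (r:ℝ)))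
        (by linarith : (0:ℝ) ≤ (r:ℝ) - 1 - (b:ℝ)),
      mul_nonneg (mul_nonneg (mul_nonneg (by linarith : (0:ℝ) ≤ (a:ℝ))
          (by linarith : (0:ℝ) ≤ (a:ℝ) - 1)) (by linarith : (0:ℝ) ≤ (r:ℝ)))
        (by linarith : (0:ℝ) ≤ (r:ℝ) - 1),
      mul_nonneg (mul_nonneg (by linarith : (0:ℝ) ≤ (a:ℝ)) (by linarith : (0:ℝ) ≤ (r:ℝ)))
        (mul_nonneg (by linarith : (0:ℝ) ≤ (r:ℝ) - 1) hb0')]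
  constructor
  · intro β₁ β₂ h1 h2 hc1 hc2
    rw [div_le_iff₀ hM]
    have hS1 : 0 ≤ ((d:ℝ) * k - (k:ℝ) * ((k:ℝ) - 1) / 2) * β₁ + ((r:ℝ) * k - k) * β₂ - B := by
      linarith
    have hS2 : 0 ≤ ((d:ℝ) * k - (r:ℝ) ^ 2 * a * ((a:ℝ) - 1) / 2 - (a:ℝ) * b * r) * β₁
        + ((r:ℝ) * k - (a:ℝ) * (r:ℝ) ^ 2 - (b:ℝ) ^ 2) * β₂ - B := by linarith
    have key : (((d:ℝ) * k - (r:ℝ) ^ 2 * a * ((a:ℝ) - 1) / 2 - (a:ℝ) * b * r) * ((r:ℝ) * k - k)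
          - ((d:ℝ) * k - (k:ℝ) * ((k:ℝ) - 1) / 2) * ((r:ℝ) * k - (a:ℝ) * (r:ℝ) ^ 2 - (b:ℝ) ^ 2))
        * (((d:ℝ) * β₁ + ((r:ℝ) - 1) * β₂) * ((k:ℝ) * (2 * (d:ℝ) + (r:ℝ) - (k:ℝ)))
            - B * (2 * (d:ℝ) + (r:ℝ) - 1))
        = ((k:ℝ) * (2 * (d:ℝ) + (r:ℝ) - (k:ℝ)))
          * ((((r:ℝ) - 1) * ((d:ℝ) * k - (r:ℝ) ^ 2 * a * ((a:ℝ) - 1) / 2 - (a:ℝ) * b * r)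
                - (d:ℝ) * ((r:ℝ) * k - (a:ℝ) * (r:ℝ) ^ 2 - (b:ℝ) ^ 2))
              * (((d:ℝ) * k - (k:ℝ) * ((k:ℝ) - 1) / 2) * β₁ + ((r:ℝ) * k - k) * β₂ - B)
            + ((d:ℝ) * ((r:ℝ) * k - k) - ((r:ℝ) - 1) * ((d:ℝ) * k - (k:ℝ) * ((k:ℝ) - 1) / 2))
              * (((d:ℝ) * k - (r:ℝ) ^ 2 * a * ((a:ℝ) - 1) / 2 - (a:ℝ) * b * r) * β₁
                  + ((r:ℝ) * k - (a:ℝ) * (r:ℝ) ^ 2 - (b:ℝ) ^ 2) * β₂ - B)) := by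
      rw [hbk']; ring
    have hRHS : 0 ≤ ((k:ℝ) * (2 * (d:ℝ) + (r:ℝ) - (k:ℝ)))
          * ((((r:ℝ) - 1) * ((d:ℝ) * k - (r:ℝ) ^ 2 * a * ((a:ℝ) - 1) / 2 - (a:ℝ) * b * r)
                - (d:ℝ) * ((r:ℝ) * k - (a:ℝ) * (r:ℝ) ^ 2 - (b:ℝ) ^ 2))
              * (((d:ℝ) * k - (k:ℝ) * ((k:ℝ) - 1) / 2) * β₁ + ((r:ℝ) * k - k) * β₂ - B)
            + ((d:ℝ) * ((r:ℝ) * k - k) - ((r:ℝ) - 1) * ((d:ℝ) * k - (k:ℝ) * ((k:ℝ) - 1) / 2))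
              * (((d:ℝ) * k - (r:ℝ) ^ 2 * a * ((a:ℝ) - 1) / 2 - (a:ℝ) * b * r) * β₁
                  + ((r:ℝ) * k - (a:ℝ) * (r:ℝ) ^ 2 - (b:ℝ) ^ 2) * β₂ - B)) :=
      mul_nonneg hM.le (add_nonneg (mul_nonneg hlam hS1) (mul_nonneg hmu hS2))
    rw [← key] at hRHS
    have := (mul_nonneg_iff_of_pos_left hnD).mp hRHS
    linarith
  · have hMne : (k:ℝ) * (2 * (d:ℝ) + (r:ℝ) - (k:ℝ)) ≠ 0 := hM.ne'
    refine ⟨by positivity, by positivity, ?_, ?_, ?_⟩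
    · have h : ((d:ℝ) * k - (k:ℝ) * ((k:ℝ) - 1) / 2)
            * (2 * B / ((k:ℝ) * (2 * (d:ℝ) + (r:ℝ) - (k:ℝ))))
          + ((r:ℝ) * k - k) * (B / ((k:ℝ) * (2 * (d:ℝ) + (r:ℝ) - (k:ℝ)))) = B := by
        rw [mul_div_assoc', mul_div_assoc', ← add_div, div_eq_iff hMne]; ring
      rw [h]
    · have h : ((d:ℝ) * k - (r:ℝ) ^ 2 * a * ((a:ℝ) - 1) / 2 - (a:ℝ) * b * r)
            * (2 * B / ((k:ℝ) * (2 * (d:ℝ) + (r:ℝ) - (k:ℝ))))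
          + ((r:ℝ) * k - (a:ℝ) * (r:ℝ) ^ 2 - (b:ℝ) ^ 2)
            * (B / ((k:ℝ) * (2 * (d:ℝ) + (r:ℝ) - (k:ℝ)))) = B := by
        rw [hbk', mul_div_assoc', mul_div_assoc', ← add_div, div_eq_iff hMne]; ring
      rw [h]
    · field_simp; ring
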